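/- Let X be a finite connected preordered set with |X| ≥ 2, R a 2-torsion free commutative ring with unity, and suppose that for any two elements x, y ∈ X and any i ∈ X with x ≠ i ≠ y, every commuting map θ on I(X,R) with coefficients C^{ij}_{xy} := θ(e_{ij})(x,y) satisfies C^{ii}_{kk} = C^{ii}_{ll} whenever k < l and k ≠ i ≠ l. Then for every commuting map θ and all i < j, k < l, one has C^{ij}_{ij} = C^{kl}_{kl} provided every pair of directed edges of X lies on a common circle (the relation ≅ has a single equivalence class). -/

import Mathlib

variable {X R : Type*} [Preorder X] [LocallyFiniteOrder X] [DecidableEq X] [CommRing R]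

/-- Membership in the incidence algebra `I(X,R)`. -/
def IsInc (f : X → X → R) : Prop := ∀ x y : X, ¬ x ≤ y → f x y = 0

/-- The convolution product of the incidence algebra. -/
def conv (f g : X → X → R) : X → X → R :=
  fun x y => ∑ z ∈ Finset.Icc x y, f x z * g z y

/-- The matrix unit `e_{ij}` of the incidence algebra. -/
def eunit (i j : X) : X → X → R := fun x y => if x = i ∧ y = j then 1 else 0

/-- A commuting map on the incidence algebra. -/
structure IsCommMap (θ : (X → X → R) → X → X → R) : Prop where
  map_inc : ∀ f, IsInc f → IsInc (θ f)
  map_add : ∀ f g, IsInc f → IsInc g → θ (f + g) = θ f + θ g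
  map_smul : ∀ (r : R) (f), IsInc f → θ (r • f) = r • θ f
  comm : ∀ f, IsInc f → conv (θ f) f = conv f (θ f)

/-- Comparability: `x ~ y` iff `x ≤ y` or `y ≤ x`. -/
def Cmp (x y : X) : Prop := x ≤ y ∨ y ≤ x

/-- A circle: `n + 2 ≥ 2` distinct vertices, cyclically consecutive ones comparable. -/
def IsCircle {n : ℕ} (f : Fin (n + 2) → X) : Prop :=
  Function.Injective f ∧ ∀ i, Cmp (f i) (f (i + 1))

/-- The relation `≅` on directed edges: `(x,y) ≅ (u,v)` iff some circle contains both
`x ~ y` and `u ~ v` as edges. -/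
def EdgeEquiv (x y u v : X) : Prop :=
  ∃ (n : ℕ) (f : Fin (n + 2) → X), IsCircle f ∧
    (∃ a b : Fin (n + 2), f a = x ∧ f b = y ∧ (b = a + 1 ∨ a = b + 1)) ∧
    (∃ c d : Fin (n + 2), f c = u ∧ f d = v ∧ (d = c + 1 ∨ c = d + 1))

lemma isInc_eunit {i j : X} (h : i ≤ j) : IsInc (eunit i j : X → X → R) := by
  intro x y hxy
  simp only [eunit, ite_eq_right_iff]
  rintro ⟨rfl, rfl⟩
  exact absurd h hxy

lemma isInc_add {f g : X → X → R} (hf : IsInc f) (hg : IsInc g) : IsInc (f + g) := by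
  intro x y h
  simp [Pi.add_apply, hf x y h, hg x y h]

lemma comm_pair (θ : (X → X → R) → X → X → R) (hθ : IsCommMap θ)
    (f g : X → X → R) (hf : IsInc f) (hg : IsInc g) (x y : X) :
    conv (θ f) g x y + conv (θ g) f x y = conv f (θ g) x y + conv g (θ f) x y := by
  have h1 := hθ.comm (f + g) (isInc_add hf hg)
  rw [hθ.map_add f g hf hg] at h1
  have h2 := congrFun (congrFun h1 x) y
  have hf' := congrFun (congrFun (hθ.comm f hf) x) y
  have hg' := congrFun (congrFun (hθ.comm g hg) x) y
  simp only [conv, Pi.add_apply, add_mul, mul_add, Finset.sum_add_distrib] at h2 hf' hg' ⊢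
  linear_combination h2 - hf' - hg'

lemma conv_eunit_right (f : X → X → R) (i j x y : X) :
    conv f (eunit i j) x y = if y = j ∧ i ∈ Finset.Icc x y then f x i else 0 := by
  simp only [conv, eunit, mul_ite, mul_one, mul_zero]
  by_cases hy : y = j
  · simp only [hy, eq_self_iff_true, and_true, true_and]
    rw [Finset.sum_ite_eq' (Finset.Icc x j) i (fun z => f x z)]
  · simp [hy]

lemma conv_eunit_left (f : X → X → R) (i j x y : X) :
    conv (eunit i j) f x y = if x = i ∧ j ∈ Finset.Icc x y then f j y else 0 := by
  simp only [conv, eunit, ite_mul, one_mul, zero_mul]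
  by_cases hx : x = i
  · simp only [hx, eq_self_iff_true, and_true, true_and]
    rw [Finset.sum_ite_eq' (Finset.Icc i y) j (fun z => f z y)]
  · simp [hx]

lemma lemA (θ : (X → X → R) → X → X → R) (hθ : IsCommMap θ) {i j : X}
    (hij : i ≤ j) (hne : i ≠ j) :
    θ (eunit i i) i i = θ (eunit i i) j j + θ (eunit i j) i j := by
  have h := comm_pair θ hθ (eunit i j) (eunit i i) (isInc_eunit hij) (isInc_eunit le_rfl) i j
  rw [conv_eunit_right, conv_eunit_right, conv_eunit_left, conv_eunit_left] at h
  simp [hne, Ne.symm hne, hij, Finset.mem_Icc] at h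
  exact h

lemma lemB (θ : (X → X → R) → X → X → R) (hθ : IsCommMap θ) {i j : X}
    (hij : i ≤ j) (hne : i ≠ j) :
    θ (eunit i j) i j + θ (eunit j j) i i = θ (eunit j j) j j := by
  have h := comm_pair θ hθ (eunit i j) (eunit j j) (isInc_eunit hij) (isInc_eunit le_rfl) i j
  rw [conv_eunit_right, conv_eunit_right, conv_eunit_left, conv_eunit_left] at h
  simp [hne, Ne.symm hne, hij, Finset.mem_Icc] at h
  exact h

open Fin.CommRing in
/-- for a finite connected preordered set `X` with `|X| ≥ 2` over a
`2`-torsion free `R`: if the diagonal coefficients of every commuting map are constant off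
`i` (relation (R3) strengthened), and all directed edges of `X` lie in a single `≅`-class,
then `C^{ij}_{ij} = C^{kl}_{kl}` for all edges `i < j`, `k < l`, for every commuting map. -/
theorem edge_coeff_constant [Fintype X] (hcard : 2 ≤ Fintype.card X)
    (hconn : ∀ x y : X, Relation.ReflTransGen Cmp x y)
    (htf : ∀ a : R, a + a = 0 → a = 0)
    (hdiag : ∀ θ : (X → X → R) → X → X → R, IsCommMap θ →
      ∀ i k l : X, k ≤ l → k ≠ l → k ≠ i → l ≠ i →
        θ (eunit i i) k k = θ (eunit i i) l l)
    (hcircle : ∀ x y u v : X, x ≤ y → x ≠ y → u ≤ v → u ≠ v → EdgeEquiv x y u v) :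
    ∀ θ : (X → X → R) → X → X → R, IsCommMap θ →
      ∀ i j k l : X, i ≤ j → i ≠ j → k ≤ l → k ≠ l →
        θ (eunit i j) i j = θ (eunit k l) k l := by
  intro θ hθ i j k l hij hnij hkl hnkl
  -- coefficient D p q = C^{pp}_{pp} - C^{pp}_{qq}
  set D : X → X → R := fun p q => θ (eunit p p) p p - θ (eunit p p) q q with hD
  have hedge : ∀ p q : X, p ≤ q → p ≠ q → D p q = θ (eunit p q) p q := by
    intro p q h hn
    have := lemA θ hθ h hn
    show θ (eunit p p) p p - θ (eunit p p) q q = θ (eunit p q) p q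
    linear_combination this
  have hedge' : ∀ p q : X, p ≤ q → p ≠ q → D q p = θ (eunit p q) p q := by
    intro p q h hn
    have := lemB θ hθ h hn
    show θ (eunit q q) q q - θ (eunit q q) p p = θ (eunit p q) p q
    linear_combination -this
  have hsym : ∀ p q : X, Cmp p q → p ≠ q → D p q = D q p := by
    intro p q hc hn
    rcases (hc : p ≤ q ∨ q ≤ p) with h | h
    · rw [hedge p q h hn, hedge' p q h hn]
    · rw [hedge q p h (Ne.symm hn), hedge' q p h (Ne.symm hn)]
  have hmove : ∀ p q r : X, Cmp q r → q ≠ r → q ≠ p → r ≠ p → D p q = D p r := by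
    intro p q r hc hn hq hr
    show θ (eunit p p) p p - θ (eunit p p) q q = θ (eunit p p) p p - θ (eunit p p) r r
    rcases hc with h | h
    · rw [hdiag θ hθ p q r h hn hq hr]
    · rw [hdiag θ hθ p r q h (Ne.symm hn) hr hq]
  obtain ⟨n, f, ⟨hinj, hcmp⟩, ⟨a, b, hfa, hfb, hab⟩, ⟨c, d, hfc, hfd, hcd⟩⟩ :=
    hcircle i j k l hij hnij hkl hnkl
  -- basic Fin facts
  have hcastne : ∀ s : ℕ, 1 ≤ s → s ≤ n + 1 → (s : Fin (n + 2)) ≠ 0 := by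
    intro s h1 h2 h
    have : ((s : Fin (n + 2)) : ℕ) = s := Fin.val_cast_of_lt (by omega)
    rw [h] at this
    simp at this
    omega
  have haddne : ∀ (t : Fin (n + 2)) (s : ℕ), 1 ≤ s → s ≤ n + 1 → t + (s : Fin (n+2)) ≠ t := by
    intro t s h1 h2 h
    have : t + (s : Fin (n+2)) = t + 0 := by rw [h, add_zero]
    exact hcastne s h1 h2 (add_left_cancel this)
  have hone : (1 : Fin (n + 2)) ≠ 0 := by
    intro h
    have := congrArg Fin.val h
    simp [Fin.val_one] at this
  have hnext : ∀ t : Fin (n + 2), t + 1 ≠ t := by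
    intro t h
    apply hone
    have h2 : t + 1 = t + 0 := by rw [h, add_zero]
    exact add_left_cancel h2
  -- moving along the circle away from the fixed vertex f t₀
  have chain : ∀ (t₀ : Fin (n + 2)) (s : ℕ), 1 ≤ s → s ≤ n + 1 →
      D (f t₀) (f (t₀ + (s : Fin (n+2)))) = D (f t₀) (f (t₀ + 1)) := by
    intro t₀ s
    induction s with
    | zero => omega
    | succ s ih =>
      intro h1 h2
      rcases Nat.eq_or_lt_of_le h1 with h | h
      · simp [← h]
      · have hs1 : 1 ≤ s := by omega
        have hs2 : s ≤ n + 1 := by omega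
        rw [← ih hs1 hs2]
        have hcast : ((s + 1 : ℕ) : Fin (n+2)) = (s : Fin (n+2)) + 1 := by push_cast; ring
        apply hmove
        · rw [hcast, ← add_assoc]
          exact (hcmp (t₀ + (s : Fin (n+2)))).symm
        · intro hE
          apply hnext (t₀ + (s : Fin (n+2)))
          have : t₀ + ((s+1 : ℕ) : Fin (n+2)) = t₀ + (s : Fin (n+2)) := hinj hE
          rw [hcast, ← add_assoc] at this
          exact this
        · intro hE
          exact haddne t₀ (s+1) (by omega) h2 (hinj hE)
        · intro hE
          exact haddne t₀ s hs1 hs2 (hinj hE)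
  set EV : Fin (n + 2) → R := fun t => D (f (t + 1)) (f t) with hEV
  have hstep : ∀ t : Fin (n + 2), EV (t + 1) = EV t := by
    intro t
    have hwrap : t = t + 1 + ((n + 1 : ℕ) : Fin (n + 2)) := by
      have : ((n + 1 : ℕ) : Fin (n + 2)) = -1 := by
        have h0 : ((n + 2 : ℕ) : Fin (n + 2)) = 0 := by
          simp [Fin.natCast_self]
        have : ((n + 1 : ℕ) : Fin (n + 2)) + 1 = 0 := by
          push_cast at h0 ⊢
          rw [← h0]; push_cast; ring
        linear_combination this
      rw [this]; ring
    have h1 := chain (t + 1) (n + 1) (by omega) le_rfl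
    rw [← hwrap] at h1
    show D (f (t + 1 + 1)) (f (t + 1)) = D (f (t + 1)) (f t)
    rw [h1]
    exact (hsym _ _ (hcmp (t + 1)) (fun hE => hnext (t + 1) (hinj hE).symm)).symm
  have hconst : ∀ t : Fin (n + 2), EV t = EV 0 := by
    have key : ∀ s : ℕ, EV (s : Fin (n+2)) = EV 0 := by
      intro s
      induction s with
      | zero => simp
      | succ s ih =>
        have : ((s + 1 : ℕ) : Fin (n+2)) = (s : Fin (n+2)) + 1 := by push_cast; ring
        rw [this, hstep, ih]
    intro t
    have := key t.val
    rwa [Fin.cast_val_eq_self] at this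
  -- identify the two edge coefficients with EV values
  have hijval : θ (eunit i j) i j = EV 0 := by
    rw [← hedge i j hij hnij]
    rcases hab with h | h
    · rw [← hconst a]
      show D i j = D (f (a + 1)) (f a)
      rw [← h, hfa, hfb]
      exact hsym i j (Or.inl hij) hnij
    · rw [← hconst b]
      show D i j = D (f (b + 1)) (f b)
      rw [← h, hfa, hfb]
  have hklval : θ (eunit k l) k l = EV 0 := by
    rw [← hedge k l hkl hnkl]
    rcases hcd with h | h
    · rw [← hconst c]
      show D k l = D (f (c + 1)) (f c)
      rw [← h, hfc, hfd]
      exact hsym k l (Or.inl hkl) hnkl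
    · rw [← hconst d]
      show D k l = D (f (d + 1)) (f d)
      rw [← h, hfc, hfd]
  rw [hijval, hklval]
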